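/- arXiv:0709.1563 — 5 statements merged into one kernel-verified Lean document; each statement's English description precedes it below -/
import Mathlib

section
/- Let A be a p×L complex matrix and let P be an L×r complex matrix. If the number of nonzero rows of P is at most the Kruskal rank of A (the maximal number q such that every set of q columns of A is linearly independent), then rank(P) = rank(A·P). -/
open Matrix Set

/-- The Kruskal rank of a matrix `A`: the maximal number `q` such that every
set of `q` columns of `A` is linearly independent. -/
noncomputable def kruskalRank {p L : ℕ} (A : Matrix (Fin p) (Fin L) ℂ) : ℕ :=
  sSup {q | q ≤ L ∧ ∀ S : Finset (Fin L), S.card = q →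
    LinearIndependent ℂ (fun j : S => A.transpose (j : Fin L))}

theorem stmt0 {p L r : ℕ} (A : Matrix (Fin p) (Fin L) ℂ) (P : Matrix (Fin L) (Fin r) ℂ)
    (h : {k | P k ≠ 0}.ncard ≤ kruskalRank A) :
    P.rank = (A * P).rank := by
  classical
  have h0 : 0 ∈ {q | q ≤ L ∧ ∀ S : Finset (Fin L), S.card = q →
      LinearIndependent ℂ (fun j : S => A.transpose (j : Fin L))} := by
    refine ⟨Nat.zero_le L, fun S hS => ?_⟩
    have : S = ∅ := Finset.card_eq_zero.mp hS
    subst this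
    exact linearIndependent_empty_type
  have hbdd : BddAbove {q | q ≤ L ∧ ∀ S : Finset (Fin L), S.card = q →
      LinearIndependent ℂ (fun j : S => A.transpose (j : Fin L))} :=
    ⟨L, fun q hq => hq.1⟩
  have hmem : kruskalRank A ∈ {q | q ≤ L ∧ ∀ S : Finset (Fin L), S.card = q →
      LinearIndependent ℂ (fun j : S => A.transpose (j : Fin L))} :=
    Nat.sSup_mem ⟨0, h0⟩ hbdd
  set T : Finset (Fin L) := Finset.univ.filter (fun k => P k ≠ 0) with hT
  have hncard : {k | P k ≠ 0}.ncard = T.card := by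
    rw [Set.ncard_eq_toFinset_card']
    congr 1
    ext k
    simp [hT]
  have hTcard : T.card ≤ kruskalRank A := by rw [← hncard]; exact h
  obtain ⟨S, hTS, hScard⟩ := Finset.exists_superset_card_eq hTcard
    (by simpa using hmem.1)
  have hLI : LinearIndependent ℂ (fun j : S => A.transpose (j : Fin L)) :=
    hmem.2 S hScard
  have hLIT : LinearIndependent ℂ (fun j : T => A.transpose (j : Fin L)) := by
    have := hLI.comp (fun j : T => (⟨(j : Fin L), hTS j.2⟩ : S))
      (fun a b hab => Subtype.ext (by simpa using hab))
    exact this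
  -- key injectivity on vectors supported on T
  have hkey : ∀ w : Fin L → ℂ, (∀ k, k ∉ T → w k = 0) → A.mulVec w = 0 → w = 0 := by
    intro w hsupp hAw
    have hsum : ∑ j : T, w (j : Fin L) • A.transpose (j : Fin L) = 0 := by
      have h1 : A.mulVec w = ∑ k : Fin L, w k • A.transpose k := by
        funext i
        simp [Matrix.mulVec, dotProduct, Finset.sum_apply, Matrix.transpose_apply,
          mul_comm]
      have h2 : ∑ k : Fin L, w k • A.transpose k = ∑ k ∈ T, w k • A.transpose k := by
        rw [← Finset.sum_subset (Finset.subset_univ T)]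
        intro k _ hk
        rw [hsupp k hk, zero_smul]
      rw [← Finset.sum_attach T (fun k => w k • A.transpose k)] at h2
      rw [h1, h2] at hAw
      exact hAw
    have hz := (Fintype.linearIndependent_iff.mp hLIT) (fun j : T => w j) hsum
    funext k
    by_cases hk : k ∈ T
    · exact hz ⟨k, hk⟩
    · exact hsupp k hk
  -- linear maps
  set f := A.mulVecLin with hf
  set g := P.mulVecLin with hg
  set W := LinearMap.range g with hW
  have hsuppW : ∀ x ∈ W, ∀ k, k ∉ T → x k = 0 := by
    rintro x ⟨v, rfl⟩ k hk
    have hPk : P k = 0 := by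
      by_contra hne
      exact hk (Finset.mem_filter.mpr ⟨Finset.mem_univ k, hne⟩)
    simp [hg, Matrix.mulVecLin, Matrix.mulVec, dotProduct, hPk]
  have hinj : Function.Injective (f.domRestrict W) := by
    rw [← LinearMap.ker_eq_bot]
    rw [LinearMap.ker_eq_bot']
    rintro ⟨x, hx⟩ hfx
    have : f x = 0 := hfx
    have hx0 : x = 0 := hkey x (hsuppW x hx) this
    exact Subtype.ext hx0
  have hrange : LinearMap.range (f.domRestrict W) = LinearMap.range (f ∘ₗ g) := by
    rw [LinearMap.range_comp, ← hW, LinearMap.range_domRestrict]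
  have hfin1 : Module.finrank ℂ W = Module.finrank ℂ (LinearMap.range (f.domRestrict W)) :=
    (LinearMap.finrank_range_of_inj hinj).symm
  have hcomp : (A * P).mulVecLin = f ∘ₗ g := by
    rw [Matrix.mulVecLin_mul]
  rw [Matrix.rank, Matrix.rank, hcomp, ← hrange, ← hfin1]
end

section
/- Let A be a p×L complex matrix with Kruskal rank σ(A). If x̄ is a solution of y = A·x and x̄ has at most σ(A)/2 nonzero entries, then x̄ is the unique solution of y = A·x with a minimal number of nonzero entries; moreover any other solution with at most σ(A)/2 nonzero entries equals x̄. -/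
open Matrix Set

lemma kruskalRank_mem {p L : ℕ} (A : Matrix (Fin p) (Fin L) ℂ) :
    kruskalRank A ≤ L ∧ ∀ S : Finset (Fin L), S.card = kruskalRank A →
      LinearIndependent ℂ (fun j : S => A.transpose (j : Fin L)) := by
  have hne : ({q | q ≤ L ∧ ∀ S : Finset (Fin L), S.card = q →
      LinearIndependent ℂ (fun j : S => A.transpose (j : Fin L))}).Nonempty := by
    refine ⟨0, Nat.zero_le _, fun S hS => ?_⟩
    have : S = ∅ := Finset.card_eq_zero.mp hS
    subst this
    exact linearIndependent_empty_type
  have hbdd : BddAbove {q | q ≤ L ∧ ∀ S : Finset (Fin L), S.card = q →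
      LinearIndependent ℂ (fun j : S => A.transpose (j : Fin L))} :=
    ⟨L, fun q hq => hq.1⟩
  exact Nat.sSup_mem hne hbdd

lemma key_lemma {p L : ℕ} (A : Matrix (Fin p) (Fin L) ℂ) (v : Fin L → ℂ)
    (hv : A.mulVec v = 0) (hs : {i | v i ≠ 0}.ncard ≤ kruskalRank A) : v = 0 := by
  classical
  obtain ⟨hkL, hind⟩ := kruskalRank_mem A
  set S : Finset (Fin L) := Finset.univ.filter (fun i => v i ≠ 0) with hSdef
  have hScoe : {i | v i ≠ 0} = (S : Set (Fin L)) := by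
    ext i; simp [hSdef]
  have hScard : S.card ≤ kruskalRank A := by
    rw [hScoe, Set.ncard_coe_finset] at hs; exact hs
  obtain ⟨T, hST, hTcard⟩ := Finset.exists_superset_card_eq hScard
    (by simpa using hkL)
  have hli := hind T hTcard
  rw [Fintype.linearIndependent_iff] at hli
  have hvT : ∀ j : Fin L, j ∉ T → v j = 0 := by
    intro j hj
    by_contra h
    exact hj (hST (by simp [hSdef, h]))
  have hsum : ∑ j : T, v (j : Fin L) • A.transpose (j : Fin L) = 0 := by
    funext i
    have : ∑ j : T, v (j : Fin L) * A i (j : Fin L) = ∑ j : Fin L, A i j * v j := by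
      rw [Finset.sum_coe_sort T (fun j => v j * A i j)]
      rw [← Finset.sum_subset (Finset.subset_univ T)]
      · exact Finset.sum_congr rfl (fun j _ => mul_comm _ _)
      · intro j _ hj; simp [hvT j hj]
    have h2 : (A.mulVec v) i = ∑ j : Fin L, A i j * v j := rfl
    simp only [Finset.sum_apply, Pi.smul_apply, Matrix.transpose_apply, smul_eq_mul]
    rw [this, ← h2, hv]
  have hz := hli (fun j => v (j : Fin L)) hsum
  funext j
  by_cases hj : j ∈ T
  · exact hz ⟨j, hj⟩
  · exact hvT j hj

lemma unique_lemma {p L : ℕ} (A : Matrix (Fin p) (Fin L) ℂ) (x xbar : Fin L → ℂ)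
    (h : A.mulVec x = A.mulVec xbar)
    (hc : {i | x i ≠ 0}.ncard + {i | xbar i ≠ 0}.ncard ≤ kruskalRank A) : x = xbar := by
  have hv : A.mulVec (x - xbar) = 0 := by
    rw [Matrix.mulVec_sub, h, sub_self]
  have hsub : {i | (x - xbar) i ≠ 0} ⊆ {i | x i ≠ 0} ∪ {i | xbar i ≠ 0} := by
    intro i hi
    by_contra hcon
    simp only [Set.mem_union, Set.mem_setOf_eq, not_or, not_not] at hcon
    exact hi (by simp [Pi.sub_apply, hcon.1, hcon.2])
  have hcard : {i | (x - xbar) i ≠ 0}.ncard ≤ kruskalRank A := by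
    calc {i | (x - xbar) i ≠ 0}.ncard
        ≤ ({i | x i ≠ 0} ∪ {i | xbar i ≠ 0}).ncard :=
          Set.ncard_le_ncard hsub (Set.toFinite _)
      _ ≤ {i | x i ≠ 0}.ncard + {i | xbar i ≠ 0}.ncard :=
          Set.ncard_union_le _ _
      _ ≤ kruskalRank A := hc
  have := key_lemma A (x - xbar) hv hcard
  exact sub_eq_zero.mp this

theorem stmt1 {p L : ℕ} (A : Matrix (Fin p) (Fin L) ℂ) (y : Fin p → ℂ) (xbar : Fin L → ℂ)
    (hsol : A.mulVec xbar = y)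
    (hsparse : 2 * {i | xbar i ≠ 0}.ncard ≤ kruskalRank A) :
    (∀ x : Fin L → ℂ, A.mulVec x = y → x ≠ xbar →
      {i | xbar i ≠ 0}.ncard < {i | x i ≠ 0}.ncard) ∧
    (∀ x : Fin L → ℂ, A.mulVec x = y → 2 * {i | x i ≠ 0}.ncard ≤ kruskalRank A →
      x = xbar) := by
  constructor
  · intro x hx hne
    by_contra hlt
    push_neg at hlt
    exact hne (unique_lemma A x xbar (hx.trans hsol.symm) (by omega))
  · intro x hx hxs
    exact unique_lemma A x xbar (hx.trans hsol.symm) (by omega)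
end

section
/- Let A be a p×L complex matrix, let P and P̃ be L×r complex matrices each having at most σ(A)/2 nonzero rows (where σ(A) is the Kruskal rank of A), and suppose (A·P)(A·P)ᴴ = (A·P̃)(A·P̃)ᴴ with A·P and A·P̃ having full column rank r. Then there exists a unitary r×r matrix R with P = P̃·R; in particular P·Pᴴ = P̃·P̃ᴴ. -/
open Matrix Set

lemma kruskal_indep {p L : ℕ} (A : Matrix (Fin p) (Fin L) ℂ) (S : Finset (Fin L))
    (hS : S.card ≤ kruskalRank A) :
    LinearIndependent ℂ (fun j : S => A.transpose (j : Fin L)) := by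
  set T := {q | q ≤ L ∧ ∀ S : Finset (Fin L), S.card = q →
    LinearIndependent ℂ (fun j : S => A.transpose (j : Fin L))} with hT
  have h0 : (0:ℕ) ∈ T := by
    refine ⟨Nat.zero_le _, fun S hS => ?_⟩
    have : IsEmpty S := by
      rw [Finset.card_eq_zero] at hS
      subst hS; simp; exact ⟨fun x => x.2⟩
    exact linearIndependent_empty_type
  have hmem : kruskalRank A ∈ T :=
    Nat.sSup_mem ⟨0, h0⟩ ⟨L, fun q hq => hq.1⟩
  obtain ⟨S', hSS', hcard⟩ := Finset.exists_superset_card_eq hS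
    (by simpa using hmem.1)
  have hind := hmem.2 S' hcard
  have := hind.comp (fun j : S => (⟨(j : Fin L), hSS' j.2⟩ : S'))
    (fun a b hab => by
      have := Subtype.ext_iff.mp hab
      simp only [] at this
      exact Subtype.ext this)
  exact this

lemma isUnit_of_rank_eq {r : ℕ} (M : Matrix (Fin r) (Fin r) ℂ) (h : M.rank = r) :
    IsUnit M := by
  rw [← Matrix.mulVec_surjective_iff_isUnit]
  have h1 : LinearMap.range M.mulVecLin = ⊤ := by
    apply Submodule.eq_top_of_finrank_eq
    rw [← Matrix.rank, h]
    simp [Module.finrank_pi]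
  have : Function.Surjective M.mulVecLin := LinearMap.range_eq_top.mp h1
  exact this


open scoped ComplexOrder in
lemma gram_unitary {p r : ℕ} (B C : Matrix (Fin p) (Fin r) ℂ)
    (hC : C.rank = r) (hGram : B * Bᴴ = C * Cᴴ) :
    ∃ R : Matrix (Fin r) (Fin r) ℂ, R * Rᴴ = 1 ∧ Rᴴ * R = 1 ∧ B = C * R := by
  have hGunit : IsUnit (Cᴴ * C) := isUnit_of_rank_eq _ (by
    rw [Matrix.rank_conjTranspose_mul_self]; exact hC)
  have hGdet : IsUnit (Cᴴ * C).det := (Matrix.isUnit_iff_isUnit_det _).mp hGunit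
  have hGinv : (Cᴴ * C) * (Cᴴ * C)⁻¹ = 1 := Matrix.mul_nonsing_inv _ hGdet
  have hinvG : (Cᴴ * C)⁻¹ * (Cᴴ * C) = 1 := Matrix.nonsing_inv_mul _ hGdet
  have hGiH : (Cᴴ * C)⁻¹ᴴ = (Cᴴ * C)⁻¹ := by
    rw [Matrix.conjTranspose_nonsing_inv, conjTranspose_mul, conjTranspose_conjTranspose]
  have hGram' : ∀ (n : ℕ) (X : Matrix (Fin p) (Fin n) ℂ), B * (Bᴴ * X) = C * (Cᴴ * X) :=
    fun n X => by rw [← Matrix.mul_assoc, ← Matrix.mul_assoc, hGram]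
  have hinvG' : ∀ (n : ℕ) (X : Matrix (Fin r) (Fin n) ℂ),
      (Cᴴ * C)⁻¹ * (Cᴴ * (C * X)) = X := fun n X => by
    rw [← Matrix.mul_assoc Cᴴ C X, ← Matrix.mul_assoc, hinvG, Matrix.one_mul]
  have hCh : ∀ (n : ℕ) (X : Matrix (Fin r) (Fin n) ℂ),
      Cᴴ * (C * ((Cᴴ * C)⁻¹ * X)) = X := fun n X => by
    rw [← Matrix.mul_assoc, ← Matrix.mul_assoc, hGinv, Matrix.one_mul]
  set Q := C * ((Cᴴ * C)⁻¹ * (Cᴴ * B)) with hQ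
  have hQB : Q = B := by
    have hMM : (Q - B) * (Q - B)ᴴ = 0 := by
      rw [hQ]
      simp only [conjTranspose_sub, Matrix.sub_mul, Matrix.mul_sub, conjTranspose_mul,
        hGiH, conjTranspose_conjTranspose]
      simp only [Matrix.mul_assoc]
      simp only [hGram, hGram', hinvG', hCh]
      abel
    exact sub_eq_zero.mp (Matrix.self_mul_conjTranspose_eq_zero.mp hMM)
  refine ⟨(Cᴴ * C)⁻¹ * Cᴴ * B, ?_, ?_, ?_⟩
  · show (Cᴴ * C)⁻¹ * Cᴴ * B * ((Cᴴ * C)⁻¹ * Cᴴ * B)ᴴ = 1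
    simp only [conjTranspose_mul, hGiH, conjTranspose_conjTranspose]
    simp only [Matrix.mul_assoc]
    simp only [hGram, hGram', hinvG', hCh]
    rw [← Matrix.mul_assoc]; exact hGinv
  · rw [mul_eq_one_comm]
    show (Cᴴ * C)⁻¹ * Cᴴ * B * ((Cᴴ * C)⁻¹ * Cᴴ * B)ᴴ = 1
    simp only [conjTranspose_mul, hGiH, conjTranspose_conjTranspose]
    simp only [Matrix.mul_assoc]
    simp only [hGram, hGram', hinvG', hCh]
    rw [← Matrix.mul_assoc]; exact hGinv
  · rw [Matrix.mul_assoc]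
    exact hQB.symm

theorem stmt8 {p L r : ℕ} (A : Matrix (Fin p) (Fin L) ℂ)
    (P Pt : Matrix (Fin L) (Fin r) ℂ)
    (hPs : 2 * {k | P k ≠ 0}.ncard ≤ kruskalRank A)
    (hPts : 2 * {k | Pt k ≠ 0}.ncard ≤ kruskalRank A)
    (hfullP : (A * P).rank = r) (hfullPt : (A * Pt).rank = r)
    (hGram : (A * P) * (A * P)ᴴ = (A * Pt) * (A * Pt)ᴴ) :
    (∃ R : Matrix (Fin r) (Fin r) ℂ, Rᴴ * R = 1 ∧ P = Pt * R) ∧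
    P * Pᴴ = Pt * Ptᴴ := by
  classical
  obtain ⟨R, hRR, hRHR, hBCR⟩ := gram_unitary (A * P) (A * Pt) hfullPt hGram
  have hAD : A * (P - Pt * R) = 0 := by
    rw [Matrix.mul_sub, ← Matrix.mul_assoc, ← hBCR, sub_self]
  have hPtR : ∀ k, Pt k = 0 → (Pt * R) k = 0 := by
    intro k hk
    funext j
    simp [Matrix.mul_apply, show ∀ i, Pt k i = 0 from fun i => congrFun hk i]
  set S : Finset (Fin L) := ({k | P k ≠ 0} ∪ {k | Pt k ≠ 0}).toFinset with hSdef
  have hcard : S.card ≤ kruskalRank A := by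
    have h1 : S.card = ({k | P k ≠ 0} ∪ {k | Pt k ≠ 0} : Set (Fin L)).ncard :=
      (Set.ncard_eq_toFinset_card' _).symm
    have h2 := Set.ncard_union_le {k | P k ≠ 0} {k | Pt k ≠ 0}
    omega
  have hind := kruskal_indep A S hcard
  have hDout : ∀ k, k ∉ S → (P - Pt * R) k = 0 := by
    intro k hk
    rw [hSdef, Set.mem_toFinset] at hk
    simp only [Set.mem_union, Set.mem_setOf_eq, not_or, not_not] at hk
    funext j
    simp [hk.1, congrFun (hPtR k hk.2) j]
  have hD0 : P - Pt * R = 0 := by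
    ext k j
    by_cases hk : k ∈ S
    · have hsum : (∑ i : S, (fun i : S => (P - Pt * R) (i : Fin L) j) i •
          A.transpose (i : Fin L)) = 0 := by
        funext i0
        rw [Finset.sum_apply]
        have e1 : ∑ x : S, ((P - Pt * R) (x : Fin L) j • A.transpose (x : Fin L)) i0
            = ∑ k' ∈ S, (P - Pt * R) k' j * A i0 k' := by
          rw [← Finset.sum_coe_sort S (fun k' => (P - Pt * R) k' j * A i0 k')]
          rfl
        rw [e1, Finset.sum_subset (Finset.subset_univ S)
          (by intro x _ hx; rw [congrFun (hDout x hx) j]; simp)]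
        have := congrFun (congrFun hAD i0) j
        simp only [Matrix.mul_apply, Matrix.zero_apply] at this
        simp only [Pi.zero_apply]
        rw [← this]
        exact Finset.sum_congr rfl fun x _ => mul_comm _ _
      have := Fintype.linearIndependent_iff.mp hind
        (fun i : S => (P - Pt * R) (i : Fin L) j) hsum ⟨k, hk⟩
      simpa using this
    · simpa using congrFun (hDout k hk) j
  have hPeq : P = Pt * R := sub_eq_zero.mp hD0
  refine ⟨⟨R, hRHR, hPeq⟩, ?_⟩
  rw [hPeq, conjTranspose_mul, Matrix.mul_assoc, ← Matrix.mul_assoc R, hRR, Matrix.one_mul]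
end

section
/- Let A be a p×L complex matrix whose entries are A_{ik} = (1/(LT))·exp(j·(2π/L)·c_i·k) for 0 ≤ k ≤ L−1 and a sampling pattern 0 ≤ c₁ < c₂ < ... < c_p ≤ L−1, with T > 0. If L is prime, then every set of min(p, L) columns of A is linearly independent; i.e., the Kruskal rank of A equals p (assuming p ≤ L). -/
open Matrix Set

namespace Cheb11

open Polynomial Finset


noncomputable def Dop (P : ℤ[X]) : ℤ[X] := X * derivative P

lemma Dop_add (P Q : ℤ[X]) : Dop (P + Q) = Dop P + Dop Q := by
  simp [Dop, mul_add]

lemma Dop_smul (z : ℤ) (P : ℤ[X]) : Dop (z • P) = z • Dop P := by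
  simp [Dop]; ring

lemma Dop_C_mul (a : ℤ) (P : ℤ[X]) : Dop (C a * P) = C a * Dop P := by
  simp [Dop, derivative_C_mul]; ring

lemma DopIter_smul (r : ℕ) (z : ℤ) (P : ℤ[X]) : Dop^[r] (z • P) = z • Dop^[r] P := by
  induction r generalizing P with
  | zero => simp
  | succ r ih => rw [Function.iterate_succ_apply, Dop_smul, ih, Function.iterate_succ_apply]

lemma DopIter_sum {α : Type*} (r : ℕ) (s : Finset α) (f : α → ℤ[X]) :
    Dop^[r] (∑ i ∈ s, f i) = ∑ i ∈ s, Dop^[r] (f i) := by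
  induction r generalizing f with
  | zero => simp
  | succ r ih =>
    rw [Function.iterate_succ_apply]
    have : Dop (∑ i ∈ s, f i) = ∑ i ∈ s, Dop (f i) := by
      simp [Dop, derivative_sum, Finset.mul_sum]
    rw [this, ih]
    simp [Function.iterate_succ_apply]

lemma Dop_Xpow (e : ℕ) : Dop (X ^ e : ℤ[X]) = C (e : ℤ) * X ^ e := by
  cases e with
  | zero => simp [Dop]
  | succ n =>
    simp only [Dop, derivative_X_pow, Nat.add_sub_cancel]
    rw [mul_left_comm, ← pow_succ']

lemma DopIter_Cmul (r : ℕ) (a : ℤ) (P : ℤ[X]) : Dop^[r] (C a * P) = C a * Dop^[r] P := by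
  induction r generalizing P with
  | zero => simp
  | succ r ih => rw [Function.iterate_succ_apply, Dop_C_mul, ih, Function.iterate_succ_apply]

lemma DopIter_Xpow (r e : ℕ) : Dop^[r] (X ^ e : ℤ[X]) = C ((e : ℤ) ^ r) * X ^ e := by
  induction r with
  | zero => simp
  | succ r ih =>
    rw [Function.iterate_succ_apply, Dop_Xpow, DopIter_Cmul, ih, ← mul_assoc, ← C_mul,
      pow_succ]
    ring_nf

lemma evalC (m : ℕ) : ∀ R : ℤ[X], (Dop^[m] ((X - 1) ^ m * R)).eval 1 = m.factorial * R.eval 1 := by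
  induction m with
  | zero => intro R; simp
  | succ m ih =>
    intro R
    have hD : Dop ((X - 1) ^ (m + 1) * R)
        = (X - 1) ^ m * (C ((m : ℤ) + 1) * X * R + X * (X - 1) * derivative R) := by
      simp only [Dop, derivative_mul, derivative_pow, derivative_sub, derivative_X,
        derivative_one]
      push_cast
      ring
    rw [Function.iterate_succ_apply, hD, ih]
    simp only [eval_add, eval_mul, eval_C, eval_X, eval_sub, eval_one]
    rw [Nat.factorial_succ]
    push_cast
    ring

lemma dvdB (m : ℕ) (P : ℤ[X]) (h : ∀ r < m, (Dop^[r] P).eval 1 = 0) : (X - 1) ^ m ∣ P := by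
  induction m with
  | zero => simp
  | succ m ih =>
    obtain ⟨R, hR⟩ := ih (fun r hr => h r (hr.trans (Nat.lt_succ_self m)))
    have h1 : (m.factorial : ℤ) * R.eval 1 = 0 := by
      rw [← evalC, ← hR]; exact h m (Nat.lt_succ_self m)
    have h2 : R.eval 1 = 0 := by
      rcases mul_eq_zero.mp h1 with h | h
      · exact absurd h (by positivity)
      · exact h
    have h3 : (X - 1 : ℤ[X]) ∣ R := by
      have := (dvd_iff_isRoot (p := R) (a := (1:ℤ))).mpr h2
      simpa using this
    obtain ⟨Q, hQ⟩ := h3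
    exact ⟨Q, by rw [hR, hQ]; ring⟩



lemma range_sum_le (n : ℕ) (s : Finset ℕ) (hcard : n ≤ s.card) :
    ∑ x ∈ range n, x ≤ ∑ x ∈ s, x := by
  induction n generalizing s with
  | zero => simp
  | succ n ih =>
    have hne : s.Nonempty := Finset.card_pos.mp (Nat.lt_of_lt_of_le (Nat.succ_pos n) hcard)
    set M := s.max' hne with hM
    have hMmem : M ∈ s := s.max'_mem hne
    have hsub : s ⊆ range (M + 1) := fun x hx =>
      Finset.mem_range.mpr (Nat.lt_succ_of_le (s.le_max' x hx))
    have hMn : n ≤ M := by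
      have := Finset.card_le_card hsub
      simp only [Finset.card_range] at this
      omega
    have hcard' : n ≤ (s.erase M).card := by
      rw [Finset.card_erase_of_mem hMmem]; omega
    have := ih (s.erase M) hcard'
    rw [Finset.sum_range_succ, ← Finset.add_sum_erase s _ hMmem]
    omega

lemma eq_range_of_sum_le (n : ℕ) (s : Finset ℕ) (hcard : s.card = n)
    (hsum : ∑ x ∈ s, x ≤ ∑ x ∈ range n, x) : s = range n := by
  induction n generalizing s with
  | zero => simpa [Finset.card_eq_zero] using hcard
  | succ n ih =>
    have hne : s.Nonempty := Finset.card_pos.mp (by omega)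
    set M := s.max' hne with hM
    have hMmem : M ∈ s := s.max'_mem hne
    have hsub : s ⊆ range (M + 1) := fun x hx =>
      Finset.mem_range.mpr (Nat.lt_succ_of_le (s.le_max' x hx))
    have hMn : n ≤ M := by
      have := Finset.card_le_card hsub
      simp only [Finset.card_range] at this
      omega
    have hcard' : (s.erase M).card = n := by
      rw [Finset.card_erase_of_mem hMmem]; omega
    have hle : ∑ x ∈ range n, x ≤ ∑ x ∈ s.erase M, x := range_sum_le n _ hcard'.ge
    have hsplit : M + ∑ x ∈ s.erase M, x = ∑ x ∈ s, x := Finset.add_sum_erase s id hMmem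
    rw [Finset.sum_range_succ] at hsum
    have hMeq : M = n := by omega
    have herase : s.erase M = range n := ih _ hcard' (by omega)
    rw [← Finset.insert_erase hMmem, herase, hMeq, Finset.range_add_one]

lemma inj_sum_ge {n : ℕ} (f : Fin n → ℕ) (hf : Function.Injective f) :
    ∑ x ∈ range n, x ≤ ∑ j, f j := by
  have himg : (Finset.image f univ).card = n := by
    rw [Finset.card_image_of_injective _ hf, Finset.card_univ, Fintype.card_fin]
  have := range_sum_le n (Finset.image f univ) himg.ge
  rwa [Finset.sum_image (fun a _ b _ h => hf h)] at this

lemma inj_eq_range {n : ℕ} (f : Fin n → ℕ) (hf : Function.Injective f)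
    (hsum : ∑ j, f j = ∑ x ∈ range n, x) : Finset.image f univ = range n := by
  have himg : (Finset.image f univ).card = n := by
    rw [Finset.card_image_of_injective _ hf, Finset.card_univ, Fintype.card_fin]
  refine eq_range_of_sum_le n _ himg ?_
  rw [Finset.sum_image (fun a _ b _ h => hf h), hsum]

lemma Nr_eval {n : ℕ} (a b : Fin n → ℕ) (r : ℕ) :
    ((Dop^[r]) (Matrix.det (Matrix.of fun i j : Fin n => (X : ℤ[X]) ^ (a i * b j)))).eval 1
    = ∑ f ∈ piAntidiag (univ : Finset (Fin n)) r,
        (Nat.multinomial univ f : ℤ) * (∏ j, ((b j : ℤ)) ^ f j)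
          * Matrix.det (Matrix.of fun i u : Fin n => ((a i : ℤ)) ^ f u) := by
  rw [Matrix.det_apply', DopIter_sum]
  have hterm : ∀ σ : Equiv.Perm (Fin n),
      (Dop^[r] (((Equiv.Perm.sign σ : ℤ) : ℤ[X]) *
        ∏ j, Matrix.of (fun i j : Fin n => (X : ℤ[X]) ^ (a i * b j)) (σ j) j)).eval 1
      = (Equiv.Perm.sign σ : ℤ) * ((∑ j, (a (σ j) : ℤ) * (b j : ℤ)) ^ r) := by
    intro σ
    have h1 : (∏ j, Matrix.of (fun i j : Fin n => (X : ℤ[X]) ^ (a i * b j)) (σ j) j)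
        = (X : ℤ[X]) ^ (∑ j, a (σ j) * b j) := by
      simp only [Matrix.of_apply]
      rw [Finset.prod_pow_eq_pow_sum]
    have h2 : (((Equiv.Perm.sign σ : ℤ) : ℤ[X])) = C ((Equiv.Perm.sign σ : ℤ)) := by
      simp
    rw [h1, h2, DopIter_Cmul, DopIter_Xpow]
    push_cast
    simp [eval_finset_sum, mul_comm]
  rw [eval_finset_sum, Finset.sum_congr rfl (fun σ _ => hterm σ)]
  have hexp : ∀ σ : Equiv.Perm (Fin n), ((∑ j, (a (σ j) : ℤ) * (b j : ℤ)) ^ r)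
      = ∑ f ∈ piAntidiag (univ : Finset (Fin n)) r,
          (Nat.multinomial univ f : ℤ) * ∏ j, ((a (σ j) : ℤ) * (b j : ℤ)) ^ f j :=
    fun σ => Finset.sum_pow_eq_sum_piAntidiag _ _ r
  simp_rw [hexp, Finset.mul_sum]
  rw [Finset.sum_comm]
  refine Finset.sum_congr rfl fun f hf => ?_
  rw [Matrix.det_apply', Finset.mul_sum]
  refine Finset.sum_congr rfl fun σ _ => ?_
  simp only [Matrix.of_apply, mul_pow, Finset.prod_mul_distrib, Int.cast_id]
  ring

lemma exists_perm {n : ℕ} {f : Fin n → ℕ} (hinj : Function.Injective f)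
    (hsum : ∑ j, f j = ∑ x ∈ range n, x) :
    ∃ τ : Equiv.Perm (Fin n), ∀ j, f j = (τ j : ℕ) := by
  have himg := inj_eq_range f hinj hsum
  have hlt : ∀ j, f j < n := by
    intro j
    have : f j ∈ Finset.image f univ := Finset.mem_image.mpr ⟨j, Finset.mem_univ j, rfl⟩
    rw [himg] at this
    exact Finset.mem_range.mp this
  have hginj : Function.Injective (fun j => (⟨f j, hlt j⟩ : Fin n)) := by
    intro u v huv
    exact hinj (congrArg Fin.val huv)
  exact ⟨Equiv.ofBijective _ ((Finite.injective_iff_bijective).mp hginj), fun j => rfl⟩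

lemma det_f_zero {n : ℕ} (a' : Fin n → ℤ) (f : Fin n → ℕ) (hf : ¬ Function.Injective f) :
    Matrix.det (Matrix.of fun i u : Fin n => a' i ^ f u) = 0 := by
  obtain ⟨u, v, huv, hne⟩ := Function.not_injective_iff.mp hf
  exact Matrix.det_zero_of_column_eq hne (fun k => by simp [huv])

lemma Nr_lt_zero {n : ℕ} (a b : Fin n → ℕ) (r : ℕ) (hr : r < ∑ x ∈ range n, x) :
    ((Dop^[r]) (Matrix.det (Matrix.of fun i j : Fin n => (X : ℤ[X]) ^ (a i * b j)))).eval 1 = 0 := by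
  rw [Nr_eval]
  refine Finset.sum_eq_zero fun f hf => ?_
  have hni : ¬ Function.Injective f := by
    intro hinj
    have h1 := inj_sum_ge f hinj
    have h2 : (∑ j, f j) = r := ((mem_piAntidiag).mp hf).1
    omega
  rw [det_f_zero _ _ hni, mul_zero]

lemma Nm_eval {n : ℕ} (a b : Fin n → ℕ) :
    ((Dop^[∑ x ∈ range n, x])
        (Matrix.det (Matrix.of fun i j : Fin n => (X : ℤ[X]) ^ (a i * b j)))).eval 1
    = (Nat.multinomial (univ : Finset (Fin n)) (fun j => (j : ℕ)) : ℤ)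
        * Matrix.det (Matrix.vandermonde fun i => ((a i : ℤ)))
        * Matrix.det (Matrix.vandermonde fun j => ((b j : ℤ))) := by
  classical
  rw [Nr_eval]
  have hfin : (∑ j : Fin n, (j : ℕ)) = ∑ x ∈ range n, x :=
    Fin.sum_univ_eq_sum_range (fun i => i) n
  rw [← Finset.sum_filter_add_sum_filter_not (piAntidiag (univ : Finset (Fin n)) (∑ x ∈ range n, x))
    (fun f => Function.Injective f)]
  have hzero : ∑ f ∈ (piAntidiag (univ : Finset (Fin n)) (∑ x ∈ range n, x)).filter
      (fun f => ¬ Function.Injective f),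
      (Nat.multinomial univ f : ℤ) * (∏ j, ((b j : ℤ)) ^ f j)
        * Matrix.det (Matrix.of fun i u : Fin n => ((a i : ℤ)) ^ f u) = 0 := by
    refine Finset.sum_eq_zero fun f hf => ?_
    rw [det_f_zero _ _ (Finset.mem_filter.mp hf).2, mul_zero]
  rw [hzero, add_zero]
  have himage : (Finset.univ : Finset (Equiv.Perm (Fin n))).image
        (fun τ => (fun j => ((τ j : ℕ))))
      = (piAntidiag (univ : Finset (Fin n)) (∑ x ∈ range n, x)).filter
          (fun f => Function.Injective f) := by
    ext f
    simp only [Finset.mem_image, Finset.mem_filter, mem_piAntidiag, Finset.mem_univ, true_and]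
    constructor
    · rintro ⟨τ, rfl⟩
      refine ⟨⟨?_, fun i _ => trivial⟩, ?_⟩
      · rw [Equiv.sum_comp τ (fun j => (j : ℕ))]
        exact hfin
      · exact Fin.val_injective.comp τ.injective
    · rintro ⟨⟨hsum, -⟩, hinj⟩
      obtain ⟨τ, hτ⟩ := exists_perm hinj hsum
      exact ⟨τ, funext fun j => (hτ j).symm⟩
  rw [← himage, Finset.sum_image (by
    intro τ _ τ' _ h
    ext j
    exact congrArg (fun g => g j) h)]
  have hterm : ∀ τ : Equiv.Perm (Fin n),
      (Nat.multinomial (univ : Finset (Fin n)) (fun j => ((τ j : ℕ))) : ℤ)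
          * (∏ j, ((b j : ℤ)) ^ ((τ j : ℕ)))
          * Matrix.det (Matrix.of fun i u : Fin n => ((a i : ℤ)) ^ ((τ u : ℕ)))
      = (Nat.multinomial (univ : Finset (Fin n)) (fun j => (j : ℕ)) : ℤ)
          * Matrix.det (Matrix.vandermonde fun i => ((a i : ℤ)))
          * ((Equiv.Perm.sign τ : ℤ) * ∏ j, ((b j : ℤ)) ^ ((τ j : ℕ))) := by
    intro τ
    have hmult : Nat.multinomial (univ : Finset (Fin n)) (fun j => ((τ j : ℕ)))
        = Nat.multinomial (univ : Finset (Fin n)) (fun j => (j : ℕ)) := by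
      unfold Nat.multinomial
      rw [Equiv.sum_comp τ (fun j => (j : ℕ)), Equiv.prod_comp τ (fun j => Nat.factorial (j : ℕ))]
    have hsub : (Matrix.of fun i u : Fin n => ((a i : ℤ)) ^ ((τ u : ℕ)))
        = (Matrix.vandermonde fun i => ((a i : ℤ))).submatrix id τ := by
      ext i u
      simp [Matrix.vandermonde_apply]
    have hdet : Matrix.det (Matrix.of fun i u : Fin n => ((a i : ℤ)) ^ ((τ u : ℕ)))
        = (Equiv.Perm.sign τ : ℤ) * Matrix.det (Matrix.vandermonde fun i => ((a i : ℤ))) := by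
      rw [hsub, Matrix.det_permute']
      norm_cast
    rw [hmult, hdet]
    ring
  rw [Finset.sum_congr rfl (fun τ _ => hterm τ), ← Finset.mul_sum]
  have hdetb : (∑ τ : Equiv.Perm (Fin n),
        (Equiv.Perm.sign τ : ℤ) * ∏ j, ((b j : ℤ)) ^ ((τ j : ℕ)))
      = Matrix.det (Matrix.transpose (Matrix.vandermonde (fun j => ((b j : ℤ))))) := by
    rw [Matrix.det_apply']
    refine Finset.sum_congr rfl fun τ _ => ?_
    simp [Matrix.vandermonde_apply, Matrix.transpose_apply, Int.cast_id]
  rw [hdetb, Matrix.det_transpose]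

/-- Chebotarev's theorem on minors of the DFT matrix of prime order. -/
lemma cheb {L n : ℕ} (hL : Nat.Prime L) (a b : Fin n → Fin L)
    (ha : Function.Injective a) (hb : Function.Injective b) {ζ : ℂ}
    (hζ : IsPrimitiveRoot ζ L) :
    Matrix.det (Matrix.of fun i j : Fin n => ζ ^ ((a i : ℕ) * (b j : ℕ))) ≠ 0 := by
  haveI : Fact (Nat.Prime L) := ⟨hL⟩
  intro h0
  set m := ∑ x ∈ range n, x with hm
  set P : ℤ[X] := Matrix.det (Matrix.of fun i j : Fin n => (X : ℤ[X]) ^ ((a i : ℕ) * (b j : ℕ)))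
    with hP
  -- aeval ζ P = 0
  have haev : aeval ζ P = 0 := by
    have h1 : (aeval ζ) P = Matrix.det ((aeval ζ : ℤ[X] →ₐ[ℤ] ℂ).mapMatrix
        (Matrix.of fun i j : Fin n => (X : ℤ[X]) ^ ((a i : ℕ) * (b j : ℕ)))) := by
      rw [hP]; exact AlgHom.map_det _ _
    have hMeq : (aeval ζ : ℤ[X] →ₐ[ℤ] ℂ).mapMatrix
          (Matrix.of fun i j : Fin n => (X : ℤ[X]) ^ ((a i : ℕ) * (b j : ℕ)))
        = Matrix.of fun i j : Fin n => ζ ^ ((a i : ℕ) * (b j : ℕ)) := by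
      ext i j
      simp [AlgHom.mapMatrix_apply, Matrix.map_apply]
    rw [h1, hMeq, h0]
  -- cyclotomic divides P over ℤ
  have hcyc : Polynomial.cyclotomic L ℤ ∣ P := by
    have hQ : Polynomial.cyclotomic L ℚ ∣ P.map (algebraMap ℤ ℚ) := by
      rw [Polynomial.cyclotomic_eq_minpoly_rat hζ hL.pos]
      refine minpoly.dvd ℚ ζ ?_
      rw [Polynomial.aeval_map_algebraMap, haev]
    rw [← Polynomial.map_cyclotomic L (algebraMap ℤ ℚ)] at hQ
    exact (Polynomial.map_dvd_map (algebraMap ℤ ℚ) (fun x y h => by exact_mod_cast h)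
      (Polynomial.cyclotomic.monic L ℤ)).mp hQ
  -- (X-1)^m divides P
  obtain ⟨R, hR⟩ := dvdB m P (fun r hr => Nr_lt_zero (fun i => (a i : ℕ)) (fun j => (b j : ℕ)) r hr)
  -- value identities
  have hNm : (m.factorial : ℤ) * R.eval 1
      = (Nat.multinomial (univ : Finset (Fin n)) (fun j => (j : ℕ)) : ℤ)
        * Matrix.det (Matrix.vandermonde fun i => ((a i : ℕ) : ℤ))
        * Matrix.det (Matrix.vandermonde fun j => ((b j : ℕ) : ℤ)) := by
    rw [← evalC m R, ← hR]
    exact Nm_eval (fun i => (a i : ℕ)) (fun j => (b j : ℕ))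
  -- cyclotomic divides R over ℤ
  have hcycR : Polynomial.cyclotomic L ℤ ∣ R := by
    have hQ : Polynomial.cyclotomic L ℚ ∣ R.map (algebraMap ℤ ℚ) := by
      have hprime : Prime (Polynomial.cyclotomic L ℚ) :=
        (Polynomial.cyclotomic.irreducible_rat hL.pos).prime
      have hdvd : Polynomial.cyclotomic L ℚ ∣
          ((X - 1 : ℚ[X]) ^ m) * R.map (algebraMap ℤ ℚ) := by
        have := Polynomial.map_dvd (algebraMap ℤ ℚ) hcyc
        rw [Polynomial.map_cyclotomic] at this
        rw [hR] at this
        simpa [Polynomial.map_mul, Polynomial.map_pow, Polynomial.map_sub, Polynomial.map_one,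
          Polynomial.map_X] using this
      rcases hprime.dvd_or_dvd hdvd with h | h
      · exfalso
        have hzero : aeval ζ ((X - 1 : ℚ[X]) ^ m) = 0 := by
          obtain ⟨t, ht⟩ := h
          rw [ht, _root_.map_mul]
          have : aeval ζ (Polynomial.cyclotomic L ℚ) = 0 := by
            rw [Polynomial.cyclotomic_eq_minpoly_rat hζ hL.pos]
            exact minpoly.aeval ℚ ζ
          rw [this, zero_mul]
        rw [_root_.map_pow, _root_.map_sub, aeval_X, _root_.map_one] at hzero
        rcases Nat.eq_zero_or_pos m with hm0 | hm0
        · rw [hm0, pow_zero] at hzero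
          exact one_ne_zero hzero
        · have hζ1 : ζ = 1 := by
            have := pow_eq_zero_iff hm0.ne' |>.mp hzero
            exact sub_eq_zero.mp this
          exact (hζ.ne_one hL.one_lt) hζ1
      · exact h
    rw [← Polynomial.map_cyclotomic L (algebraMap ℤ ℚ)] at hQ
    exact (Polynomial.map_dvd_map (algebraMap ℤ ℚ) (fun x y h => by exact_mod_cast h)
      (Polynomial.cyclotomic.monic L ℤ)).mp hQ
  -- L divides R.eval 1
  have hLdvd : (L : ℤ) ∣ R.eval 1 := by
    obtain ⟨t, ht⟩ := hcycR
    refine ⟨t.eval 1, ?_⟩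
    rw [ht, Polynomial.eval_mul, Polynomial.eval_one_cyclotomic_prime]
  -- cancel the multinomial coefficient
  have hmult : (m.factorial : ℤ)
      = (Nat.multinomial (univ : Finset (Fin n)) (fun j => (j : ℕ)) : ℤ)
          * (∏ j : Fin n, (Nat.factorial (j : ℕ) : ℤ)) := by
    have hspec := Nat.multinomial_spec (univ : Finset (Fin n)) (fun j => (j : ℕ))
    have hfin : (∑ j : Fin n, (j : ℕ)) = m := Fin.sum_univ_eq_sum_range (fun i => i) n
    rw [hfin] at hspec
    have hnat : m.factorial = (Nat.multinomial (univ : Finset (Fin n)) (fun j => (j : ℕ)))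
        * ∏ j : Fin n, Nat.factorial (j : ℕ) := by
      rw [← hspec, Nat.mul_comm]
    exact_mod_cast congrArg (fun x : ℕ => (x : ℤ)) hnat
  have hkey : (∏ j : Fin n, (Nat.factorial (j : ℕ) : ℤ)) * R.eval 1
      = Matrix.det (Matrix.vandermonde fun i => ((a i : ℕ) : ℤ))
        * Matrix.det (Matrix.vandermonde fun j => ((b j : ℕ) : ℤ)) := by
    have hmpos : (Nat.multinomial (univ : Finset (Fin n)) (fun j => (j : ℕ)) : ℤ) ≠ 0 := by
      exact_mod_cast (Nat.multinomial_pos _ _).ne'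
    apply mul_left_cancel₀ hmpos
    calc (Nat.multinomial (univ : Finset (Fin n)) (fun j => (j : ℕ)) : ℤ)
          * ((∏ j : Fin n, (Nat.factorial (j : ℕ) : ℤ)) * R.eval 1)
        = (m.factorial : ℤ) * R.eval 1 := by rw [hmult]; ring
      _ = _ := by rw [hNm]; ring
  -- pass to ZMod L
  have hzm : ((Matrix.det (Matrix.vandermonde fun i => ((a i : ℕ) : ℤ))
        * Matrix.det (Matrix.vandermonde fun j => ((b j : ℕ) : ℤ)) : ℤ) : ZMod L) = 0 := by
    rw [← hkey]
    have : (L : ℤ) ∣ (∏ j : Fin n, (Nat.factorial (j : ℕ) : ℤ)) * R.eval 1 :=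
      Dvd.dvd.mul_left hLdvd _
    exact_mod_cast (ZMod.intCast_zmod_eq_zero_iff_dvd _ L).mpr this
  -- contradiction: both Vandermonde determinants are nonzero mod L
  have hva : (Matrix.det (Matrix.vandermonde fun i => ((a i : ℕ) : ZMod L))) ≠ 0 := by
    rw [Matrix.det_vandermonde_ne_zero_iff]
    intro u v huv
    apply ha
    have h2 : ((a u : ℕ) : ZMod L) = ((a v : ℕ) : ZMod L) := huv
    have h3 : ((a u : ℕ) : ZMod L).val = ((a v : ℕ) : ZMod L).val := by rw [h2]
    rw [ZMod.val_cast_of_lt (a u).isLt, ZMod.val_cast_of_lt (a v).isLt] at h3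
    exact Fin.val_injective h3
  have hvb : (Matrix.det (Matrix.vandermonde fun j => ((b j : ℕ) : ZMod L))) ≠ 0 := by
    rw [Matrix.det_vandermonde_ne_zero_iff]
    intro u v huv
    apply hb
    have h2 : ((b u : ℕ) : ZMod L) = ((b v : ℕ) : ZMod L) := huv
    have h3 : ((b u : ℕ) : ZMod L).val = ((b v : ℕ) : ZMod L).val := by rw [h2]
    rw [ZMod.val_cast_of_lt (b u).isLt, ZMod.val_cast_of_lt (b v).isLt] at h3
    exact Fin.val_injective h3
  have hcast : ∀ (v : Fin n → ℕ),
      ((Matrix.det (Matrix.vandermonde fun i => ((v i : ℤ))) : ℤ) : ZMod L)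
        = Matrix.det (Matrix.vandermonde fun i => ((v i : ZMod L))) := by
    intro v
    have h1 : ((Matrix.det (Matrix.vandermonde fun i => ((v i : ℤ))) : ℤ) : ZMod L)
        = ((Int.castRingHom (ZMod L)).mapMatrix (Matrix.vandermonde fun i => ((v i : ℤ)))).det :=
      RingHom.map_det (Int.castRingHom (ZMod L)) _
    rw [h1]
    congr 1
    ext i j
    simp [Matrix.vandermonde_apply, RingHom.mapMatrix_apply, Matrix.map_apply]
  rw [Int.cast_mul, hcast, hcast] at hzm
  rcases mul_eq_zero.mp hzm with h | h
  · exact hva h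
  · exact hvb h


end Cheb11


theorem stmt11 {p L : ℕ} (T : ℝ) (hT : 0 < T) (hL : Nat.Prime L) (hp : p ≤ L)
    (c : Fin p → Fin L) (hc : StrictMono c)
    (A : Matrix (Fin p) (Fin L) ℂ)
    (hA : ∀ (i : Fin p) (k : Fin L),
      A i k = ((1 / (L * T) : ℝ) : ℂ) *
        Complex.exp (Complex.I * (2 * Real.pi / L) * ((c i : ℕ) : ℂ) * ((k : ℕ) : ℂ))) :
    (∀ S : Finset (Fin L), S.card = min p L →
      LinearIndependent ℂ (fun j : S => A.transpose (j : Fin L))) ∧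
    kruskalRank A = p := by
  have hLpos : 0 < L := hL.pos
  set ζ : ℂ := Complex.exp (2 * Real.pi * Complex.I / L) with hζdef
  have hζ : IsPrimitiveRoot ζ L := Complex.isPrimitiveRoot_exp L hL.ne_zero
  have hκ : ((1 / (L * T) : ℝ) : ℂ) ≠ 0 := by
    push_cast
    have : (L : ℝ) * T > 0 := by positivity
    simp only [ne_eq, div_eq_zero_iff, one_ne_zero, false_or]
    exact_mod_cast this.ne'
  have hmin : min p L = p := min_eq_left hp
  have part1 : ∀ S : Finset (Fin L), S.card = p →
      LinearIndependent ℂ (fun j : S => A.transpose (j : Fin L)) := by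
    intro S hS
    have e : S ≃ Fin p := S.equivFinOfCardEq hS
    rw [← linearIndependent_equiv e.symm]
    have hbinj : Function.Injective (fun j : Fin p => ((e.symm j : Fin L))) := by
      intro u v huv
      exact e.symm.injective (Subtype.ext huv)
    set B : Matrix (Fin p) (Fin p) ℂ :=
      Matrix.of fun i j => A i ((e.symm j : Fin L)) with hBdef
    have hcomp : ((fun j : S => A.transpose (j : Fin L)) ∘ e.symm)
        = fun j : Fin p => B.transpose j := by
      funext j
      ext i
      simp [hBdef, Matrix.transpose_apply]
    rw [hcomp, show (fun j : Fin p => B.transpose j) = B.col from rfl, Matrix.linearIndependent_cols_iff_isUnit]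
    rw [Matrix.isUnit_iff_isUnit_det, isUnit_iff_ne_zero]
    have hBeq : B = ((1 / (L * T) : ℝ) : ℂ) •
        (Matrix.of fun i j : Fin p => ζ ^ ((c i : ℕ) * ((e.symm j : Fin L) : ℕ))) := by
      ext i j
      simp only [hBdef, Matrix.of_apply, Matrix.smul_apply, smul_eq_mul]
      rw [hA]
      congr 1
      rw [← Complex.exp_nat_mul]
      congr 1
      push_cast
      have hL0 : (L : ℂ) ≠ 0 := by exact_mod_cast hLpos.ne'
      field_simp
    rw [hBeq, Matrix.det_smul]
    refine mul_ne_zero (pow_ne_zero _ hκ) ?_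
    exact Cheb11.cheb hL c (fun j => ((e.symm j : Fin L))) hc.injective hbinj hζ
  have part1' : ∀ S : Finset (Fin L), S.card = min p L →
      LinearIndependent ℂ (fun j : S => A.transpose (j : Fin L)) := by
    rw [hmin]; exact part1
  refine ⟨part1', ?_⟩
  have hset : {q | q ≤ L ∧ ∀ S : Finset (Fin L), S.card = q →
      LinearIndependent ℂ (fun j : S => A.transpose (j : Fin L))} = Set.Iic p := by
    ext q
    simp only [Set.mem_setOf_eq, Set.mem_Iic]
    constructor
    · rintro ⟨hqL, hq⟩
      by_contra hqp
      push_neg at hqp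
      obtain ⟨S, -, hScard⟩ := Finset.exists_subset_card_eq
        (show q ≤ (Finset.univ : Finset (Fin L)).card by
          rw [Finset.card_univ, Fintype.card_fin]; exact hqL)
      have hfin := (hq S hScard).fintype_card_le_finrank
      rw [Fintype.card_coe, hScard, Module.finrank_fin_fun] at hfin
      omega
    · intro hqp
      refine ⟨hqp.trans hp, fun S hS => ?_⟩
      obtain ⟨S', hsub, -, hS'card⟩ := Finset.exists_subsuperset_card_eq (n := p)
        (Finset.subset_univ S) (by rw [hS]; exact hqp)
        (by rw [Finset.card_univ, Fintype.card_fin]; exact hp)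
      have hLI := part1 S' hS'card
      have hinj : Function.Injective (fun x : S => (⟨x.1, hsub x.2⟩ : S')) := by
        intro u v huv
        simp only [Subtype.mk.injEq] at huv
        exact Subtype.ext huv
      have := hLI.comp _ hinj
      exact this
  rw [kruskalRank, hset, csSup_Iic]
end

section
/- Let x(f), f ∈ [0, 1/T], be the Fourier transform of a signal whose support is a union of N intervals each of width at most B, and let L ≤ 1/(BT). Define the vector-valued function x(f) ∈ ℂᴸ by x_i(f) = X(f + i/(LT)) for f ∈ [0, 1/(LT)). Then the diversity set S = ⋃_{f ∈ [0,1/(LT))} I(x(f)) satisfies |S| ≤ 2N. -/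
open Set

theorem stmt16 (B T : ℝ) (L N : ℕ) (hB : 0 < B) (hT : 0 < T) (hL : 0 < L)
    (hLBT : (L : ℝ) ≤ 1 / (B * T))
    (X : ℝ → ℂ) (a b : Fin N → ℝ)
    (hband : ∀ n : Fin N, a n ≤ b n ∧ 0 ≤ a n ∧ b n ≤ 1 / T ∧ b n - a n ≤ B)
    (hsupp : ∀ f : ℝ, X f ≠ 0 → ∃ n : Fin N, f ∈ Set.Icc (a n) (b n)) :
    {i : Fin L | ∃ f ∈ Set.Ico (0 : ℝ) (1 / (L * T)),
      X (f + (i : ℝ) / (L * T)) ≠ 0}.ncard ≤ 2 * N := by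
  classical
  set S := {i : Fin L | ∃ f ∈ Set.Ico (0 : ℝ) (1 / (L * T)),
      X (f + (i : ℝ) / (L * T)) ≠ 0} with hS
  have hLT : (0:ℝ) < (L:ℝ) * T := by positivity
  have hLTne : ((L:ℝ) * T) ≠ 0 := ne_of_gt hLT
  have hBTle : (L:ℝ) * (B * T) ≤ 1 := by
    have := (le_div_iff₀ (by positivity : (0:ℝ) < B * T)).mp hLBT
    linarith
  set c : Fin N → ℕ := fun n => ⌊(L:ℝ) * T * a n⌋₊ with hc
  have key : ∀ i ∈ S, ∃ n : Fin N, (i:ℕ) = c n ∨ (i:ℕ) = c n + 1 := by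
    intro i hi
    obtain ⟨f, ⟨hf0, hf1⟩, hX⟩ := hi
    obtain ⟨n, hna, hnb⟩ := hsupp _ hX
    refine ⟨n, ?_⟩
    obtain ⟨hab, ha0, hb1, hBa⟩ := hband n
    set y := f + (i:ℝ) / ((L:ℝ) * T) with hy
    have hfloor : (i:ℕ) = ⌊(L:ℝ) * T * y⌋₊ := by
      have : (L:ℝ) * T * y = (L:ℝ) * T * f + (i:ℕ) := by
        rw [hy, mul_add]; congr 1; field_simp
      rw [this]
      have h0 : 0 ≤ (L:ℝ) * T * f := by positivity
      have h1 : (L:ℝ) * T * f < 1 := by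
        have := (lt_div_iff₀ hLT).mp hf1
        linarith
      symm
      rw [Nat.floor_eq_iff (by positivity)]
      constructor
      · push_cast; linarith
      · push_cast; linarith
    have hlow : c n ≤ ⌊(L:ℝ) * T * y⌋₊ := by
      apply Nat.floor_le_floor
      have : a n ≤ y := hna
      nlinarith
    have hhigh : ⌊(L:ℝ) * T * y⌋₊ ≤ c n + 1 := by
      have hyb : y ≤ b n := hnb
      have h1 : (L:ℝ) * T * y ≤ (L:ℝ) * T * a n + 1 := by nlinarith
      have h2 : ⌊(L:ℝ) * T * y⌋₊ ≤ ⌊(L:ℝ) * T * a n + 1⌋₊ := Nat.floor_le_floor h1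
      rwa [Nat.floor_add_one (by positivity)] at h2
    rw [hfloor]
    omega
  rcases Nat.eq_zero_or_pos N with hN0 | hNpos
  · subst hN0
    have : S = ∅ := by
      ext i
      simp only [Set.mem_empty_iff_false, iff_false]
      intro hi
      obtain ⟨n, _⟩ := key i hi
      exact n.elim0
    rw [this]; simp
  · have hNe : Nonempty (Fin N) := ⟨⟨0, hNpos⟩⟩
    have key2 : ∀ i : Fin L, ∃ n : Fin N, i ∈ S → ((i:ℕ) = c n ∨ (i:ℕ) = c n + 1) := by
      intro i
      by_cases hi : i ∈ S
      · obtain ⟨n, hn⟩ := key i hi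
        exact ⟨n, fun _ => hn⟩
      · exact ⟨Classical.arbitrary _, fun h => absurd h hi⟩
    choose g hg using key2
    have hinj : Set.InjOn (fun i => (g i, decide ((i:ℕ) = c (g i)))) S := by
      intro i hi j hj hij
      simp only [Prod.mk.injEq] at hij
      obtain ⟨hgij, hbit⟩ := hij
      have hi' := hg i hi
      have hj' := hg j hj
      rw [hgij] at hi'
      apply Fin.val_injective
      rcases hi' with h1 | h1 <;> rcases hj' with h2 | h2 <;>
        simp [h1, h2, hgij] at hbit ⊢ <;> omega
    have := Set.ncard_le_ncard_of_injOn (fun i => (g i, decide ((i:ℕ) = c (g i))))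
      (fun i _ => Set.mem_univ _) hinj (Set.finite_univ)
    rw [Set.ncard_univ, Nat.card_eq_fintype_card] at this
    simpa [Fintype.card_prod, mul_comm] using this
end
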